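/- The set α_3 = {(1/6, 1/6), (5/6, 1/6), (1/2, 5/6)} has distortion error ∫ min_{a∈α_3} ‖x−a‖² dP = 1/12 with respect to the Voronoi partition in which J_1 is assigned to (1/6,1/6), J_2 to (5/6,1/6), and J_3 ∪ J_4 to (1/2,5/6). -/

import Mathlib

open MeasureTheory Set
open scoped ENNReal

/-- The four contractive similarities of ratio 1/3 generating the Sierpiński carpet.
`S 0, S 1, S 2, S 3` correspond to `S_1, S_2, S_3, S_4` in the paper. -/
noncomputable def S (i : Fin 4) (p : ℝ × ℝ) : ℝ × ℝ :=
  (p.1 / 3 + (if i = 1 ∨ i = 3 then (2 : ℝ) / 3 else 0),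
   p.2 / 3 + (if i = 2 ∨ i = 3 then (2 : ℝ) / 3 else 0))

/-- Composition `S_{σ_1} ∘ ⋯ ∘ S_{σ_k}` along a word `σ`. -/
noncomputable def Sw (σ : List (Fin 4)) : ℝ × ℝ → ℝ × ℝ :=
  σ.foldr (fun i g => S i ∘ g) id

/-- The unit square `J = [0,1] × [0,1]`. -/
def K : Set (ℝ × ℝ) := Icc (0, 0) (1, 1)

/-- The basic square `J_σ = S_σ([0,1]²)`. -/
noncomputable def Jw (σ : List (Fin 4)) : Set (ℝ × ℝ) := Sw σ '' K

/-- The self-similarity equation `P = (1/4) ∑_{i=1}^4 P ∘ S_i⁻¹`. -/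
def SelfSimilar (P : Measure (ℝ × ℝ)) : Prop :=
  P = (1 / 4 : ℝ≥0∞) • P.map (S 0) + (1 / 4 : ℝ≥0∞) • P.map (S 1)
    + (1 / 4 : ℝ≥0∞) • P.map (S 2) + (1 / 4 : ℝ≥0∞) • P.map (S 3)

/-- Distortion error of a set `α` of points: `∫ min_{a∈α} ‖x−a‖² dP`
(squared Euclidean distance). -/
noncomputable def distortion (P : Measure (ℝ × ℝ)) (α : Set (ℝ × ℝ)) : ℝ :=
  ∫ x, (⨅ a ∈ α, ((x.1 - a.1) ^ 2 + (x.2 - a.2) ^ 2)) ∂P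

/-- The `n`-th quantization error. -/
noncomputable def Vq (P : Measure (ℝ × ℝ)) (n : ℕ) : ℝ :=
  sInf (distortion P '' {α | α.Finite ∧ α.Nonempty ∧ α.ncard ≤ n})

section Aux

lemma S_cont (i : Fin 4) : Continuous (S i) := by
  unfold S; fun_prop

lemma S_meas (i : Fin 4) : Measurable (S i) := (S_cont i).measurable

lemma S_inj (i : Fin 4) : Function.Injective (S i) := by
  intro p q h
  simp only [S, Prod.mk.injEq] at h
  have h1 : p.1 = q.1 := by have := h.1; linarith
  have h2 : p.2 = q.2 := by have := h.2; linarith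
  exact Prod.ext h1 h2

lemma S0 (p : ℝ × ℝ) : S 0 p = (p.1 / 3 + 0, p.2 / 3 + 0) := by
  rw [S, if_neg (by decide), if_neg (by decide)]

lemma S1 (p : ℝ × ℝ) : S 1 p = (p.1 / 3 + 2/3, p.2 / 3 + 0) := by
  rw [S, if_pos (by decide), if_neg (by decide)]

lemma S2 (p : ℝ × ℝ) : S 2 p = (p.1 / 3 + 0, p.2 / 3 + 2/3) := by
  rw [S, if_neg (by decide), if_pos (by decide)]

lemma S3 (p : ℝ × ℝ) : S 3 p = (p.1 / 3 + 2/3, p.2 / 3 + 2/3) := by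
  rw [S, if_pos (by decide), if_pos (by decide)]

lemma mem_K_iff {p : ℝ × ℝ} : p ∈ K ↔ (0 ≤ p.1 ∧ 0 ≤ p.2) ∧ p.1 ≤ 1 ∧ p.2 ≤ 1 := by
  simp [K, Set.mem_Icc, Prod.le_def]

lemma K_nonempty : K.Nonempty := ⟨(0, 0), by simp [mem_K_iff]⟩

lemma S_mem_K {i : Fin 4} {p : ℝ × ℝ} (hp : p ∈ K) : S i p ∈ K := by
  rw [mem_K_iff] at hp ⊢
  obtain ⟨⟨h1, h2⟩, h3, h4⟩ := hp
  simp only [S]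
  split_ifs <;> constructor <;> constructor <;> linarith

lemma dist_S (i : Fin 4) (x y : ℝ × ℝ) : dist (S i x) (S i y) = dist x y / 3 := by
  simp only [Prod.dist_eq, S, Real.dist_eq]
  have e1 : x.1 / 3 + (if i = 1 ∨ i = 3 then (2 : ℝ) / 3 else 0)
      - (y.1 / 3 + (if i = 1 ∨ i = 3 then (2 : ℝ) / 3 else 0)) = (x.1 - y.1) / 3 := by ring
  have e2 : x.2 / 3 + (if i = 2 ∨ i = 3 then (2 : ℝ) / 3 else 0)
      - (y.2 / 3 + (if i = 2 ∨ i = 3 then (2 : ℝ) / 3 else 0)) = (x.2 - y.2) / 3 := by ring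
  rw [e1, e2, abs_div, abs_div]
  rw [show |(3:ℝ)| = 3 by norm_num]
  rw [max_div_div_right (by norm_num : (0:ℝ) ≤ 3)]

lemma isCompact_K : IsCompact K := isCompact_Icc

lemma isClosed_K : IsClosed K := isClosed_Icc

lemma infDist_S_le (i : Fin 4) (x : ℝ × ℝ) :
    Metric.infDist (S i x) K ≤ Metric.infDist x K / 3 := by
  obtain ⟨y, hyK, hy⟩ := isCompact_K.exists_infDist_eq_dist K_nonempty x
  calc Metric.infDist (S i x) K ≤ dist (S i x) (S i y) :=
        Metric.infDist_le_dist_of_mem (S_mem_K hyK)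
    _ = dist x y / 3 := dist_S i x y
    _ = Metric.infDist x K / 3 := by rw [hy]

variable {P : Measure (ℝ × ℝ)} [IsProbabilityMeasure P]

lemma measure_A_zero (hP : SelfSimilar P) {r : ℝ} (hr : 0 < r) :
    P {x | r < Metric.infDist x K} = 0 := by
  set A : ℝ → Set (ℝ × ℝ) := fun r => {x | r < Metric.infDist x K} with hA
  have hmeas : ∀ s : ℝ, MeasurableSet (A s) := fun s =>
    (isOpen_lt continuous_const (Metric.continuous_infDist_pt K)).measurableSet
  have hmono : ∀ {s t : ℝ}, s ≤ t → A t ⊆ A s := by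
    intro s t hst x hx
    exact lt_of_le_of_lt hst hx
  have step : ∀ s : ℝ, P (A s) ≤ P (A (3 * s)) := by
    intro s
    have hsub : ∀ i : Fin 4, S i ⁻¹' A s ⊆ A (3 * s) := by
      intro i x hx
      simp only [A, Set.mem_setOf_eq, Set.mem_preimage] at hx ⊢
      have := infDist_S_le i x
      linarith
    have expand : P (A s) = (1/4 : ℝ≥0∞) * P (S 0 ⁻¹' A s) + (1/4 : ℝ≥0∞) * P (S 1 ⁻¹' A s)
        + (1/4 : ℝ≥0∞) * P (S 2 ⁻¹' A s) + (1/4 : ℝ≥0∞) * P (S 3 ⁻¹' A s) := by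
      conv_lhs => rw [hP]
      simp [Measure.map_apply (S_meas _) (hmeas s), smul_eq_mul]
    rw [expand]
    calc (1/4 : ℝ≥0∞) * P (S 0 ⁻¹' A s) + (1/4 : ℝ≥0∞) * P (S 1 ⁻¹' A s)
        + (1/4 : ℝ≥0∞) * P (S 2 ⁻¹' A s) + (1/4 : ℝ≥0∞) * P (S 3 ⁻¹' A s)
        ≤ (1/4 : ℝ≥0∞) * P (A (3*s)) + (1/4 : ℝ≥0∞) * P (A (3*s))
        + (1/4 : ℝ≥0∞) * P (A (3*s)) + (1/4 : ℝ≥0∞) * P (A (3*s)) := by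
          gcongr <;> exact hsub _
      _ = P (A (3*s)) := by
          rw [← add_mul, ← add_mul, ← add_mul]
          have h4 : (1/4 + 1/4 + 1/4 + 1/4 : ℝ≥0∞) = 1 := by
            rw [ENNReal.div_add_div_same, ENNReal.div_add_div_same, ENNReal.div_add_div_same,
              show (1 + 1 + 1 + 1 : ℝ≥0∞) = 4 from by norm_num, ENNReal.div_self]
            · norm_num
            · norm_num
          rw [h4, one_mul]
  have iter : ∀ n : ℕ, P (A r) ≤ P (A (3 ^ n * r)) := by
    intro n
    induction n with
    | zero => simp
    | succ n ih =>
      refine le_trans ih (le_trans (step _) (le_of_eq ?_))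
      congr 1
      ring_nf
  have hanti : Antitone (fun n : ℕ => A (3 ^ n * r)) := by
    intro n m hnm
    apply hmono
    have : (3:ℝ) ^ n ≤ 3 ^ m := pow_le_pow_right₀ (by norm_num) hnm
    nlinarith
  have hto : Filter.Tendsto (fun n : ℕ => P (A (3 ^ n * r))) Filter.atTop
      (nhds (P (⋂ n : ℕ, A (3 ^ n * r)))) :=
    tendsto_measure_iInter_atTop (fun n => (hmeas _).nullMeasurableSet) hanti
      ⟨0, measure_ne_top P _⟩
  have hempty : (⋂ n : ℕ, A (3 ^ n * r)) = ∅ := by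
    ext x
    simp only [Set.mem_iInter, Set.mem_empty_iff_false, iff_false, not_forall]
    obtain ⟨n, hn⟩ := pow_unbounded_of_one_lt (Metric.infDist x K / r) (by norm_num : (1:ℝ) < 3)
    refine ⟨n, ?_⟩
    simp only [A, Set.mem_setOf_eq, not_lt]
    rw [div_lt_iff₀ hr] at hn
    linarith
  rw [hempty] at hto
  simp only [measure_empty] at hto
  have := ge_of_tendsto hto (Filter.Eventually.of_forall iter)
  exact le_antisymm this zero_le

lemma K_compl_null (hP : SelfSimilar P) : P Kᶜ = 0 := by
  have hsub : Kᶜ ⊆ ⋃ n : ℕ, {x : ℝ × ℝ | 1 / (n + 1 : ℝ) < Metric.infDist x K} := by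
    intro x hx
    have hd : 0 < Metric.infDist x K :=
      (isClosed_K.notMem_iff_infDist_pos K_nonempty).1 hx
    obtain ⟨n, hn⟩ := exists_nat_one_div_lt hd
    exact Set.mem_iUnion.2 ⟨n, hn⟩
  refine le_antisymm (le_trans (measure_mono hsub) (le_of_eq ?_)) zero_le
  refine measure_iUnion_null fun n => measure_A_zero hP ?_
  positivity

lemma restrict_K (hP : SelfSimilar P) : P.restrict K = P := by
  refine Measure.restrict_eq_self_of_ae_mem ?_
  rw [Filter.eventually_iff, mem_ae_iff]
  simpa using K_compl_null hP

lemma integrable_cont (hP : SelfSimilar P) {g : ℝ × ℝ → ℝ} (hg : Continuous g) :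
    Integrable g P := by
  rw [← restrict_K hP]
  exact hg.continuousOn.integrableOn_compact isCompact_K

lemma integrable_parts (hP : SelfSimilar P) {g : ℝ × ℝ → ℝ} (hg : Integrable g P)
    (i : Fin 4) : Integrable g (P.map (S i)) := by
  rw [hP] at hg
  have h0 := hg.left_of_add_measure.left_of_add_measure.left_of_add_measure
  have h1 := hg.left_of_add_measure.left_of_add_measure.right_of_add_measure
  have h2 := hg.left_of_add_measure.right_of_add_measure
  have h3 := hg.right_of_add_measure
  have conv : ∀ {μ : Measure (ℝ × ℝ)}, Integrable g ((1/4 : ℝ≥0∞) • μ) → Integrable g μ :=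
    fun h => (integrable_smul_measure (by norm_num) (by norm_num)).1 h
  fin_cases i
  · exact conv h0
  · exact conv h1
  · exact conv h2
  · exact conv h3

lemma unfold_integral (hP : SelfSimilar P) {g : ℝ × ℝ → ℝ} (hg : Integrable g P) :
    ∫ x, g x ∂P = (1/4) * ((∫ x, g (S 0 x) ∂P) + (∫ x, g (S 1 x) ∂P)
      + (∫ x, g (S 2 x) ∂P) + (∫ x, g (S 3 x) ∂P)) := by
  have hi : ∀ i : Fin 4, Integrable g (P.map (S i)) := integrable_parts hP hg
  have hs : ∀ i : Fin 4, Integrable g ((1/4 : ℝ≥0∞) • P.map (S i)) := fun i =>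
    (integrable_smul_measure (c := (1/4 : ℝ≥0∞)) (by norm_num) (by norm_num)).2 (hi i)
  have hmap : ∀ i : Fin 4, ∫ x, g x ∂(P.map (S i)) = ∫ x, g (S i x) ∂P := fun i =>
    integral_map (S_meas i).aemeasurable (hi i).aestronglyMeasurable
  conv_lhs => rw [hP]
  rw [integral_add_measure (((hs 0).add_measure (hs 1)).add_measure (hs 2)) (hs 3),
    integral_add_measure ((hs 0).add_measure (hs 1)) (hs 2),
    integral_add_measure (hs 0) (hs 1),
    integral_smul_measure, integral_smul_measure, integral_smul_measure, integral_smul_measure,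
    hmap 0, hmap 1, hmap 2, hmap 3]
  have : ((1:ℝ≥0∞)/4).toReal = (1/4 : ℝ) := by
    rw [ENNReal.toReal_div]
    norm_num
  rw [this]
  simp only [smul_eq_mul]
  ring

lemma moment_fst (hP : SelfSimilar P) : ∫ x : ℝ × ℝ, x.1 ∂P = 1 / 2 := by
  have h1 : Integrable (fun x : ℝ × ℝ => x.1) P := integrable_cont hP continuous_fst
  have key : ∀ c : ℝ, ∫ x : ℝ × ℝ, (x.1 / 3 + c) ∂P = (∫ x : ℝ × ℝ, x.1 ∂P) / 3 + c := by
    intro c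
    rw [integral_add (h1.div_const 3) (integrable_const c), integral_div, integral_const]
    simp
  have h := unfold_integral hP h1
  simp only [S0, S1, S2, S3] at h
  rw [key 0, key (2/3)] at h
  linarith

lemma moment_snd (hP : SelfSimilar P) : ∫ x : ℝ × ℝ, x.2 ∂P = 1 / 2 := by
  have h1 : Integrable (fun x : ℝ × ℝ => x.2) P := integrable_cont hP continuous_snd
  have key : ∀ c : ℝ, ∫ x : ℝ × ℝ, (x.2 / 3 + c) ∂P = (∫ x : ℝ × ℝ, x.2 ∂P) / 3 + c := by
    intro c
    rw [integral_add (h1.div_const 3) (integrable_const c), integral_div, integral_const]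
    simp
  have h := unfold_integral hP h1
  simp only [S0, S1, S2, S3] at h
  rw [key 0, key (2/3)] at h
  linarith

lemma moment_fst_sq (hP : SelfSimilar P) : ∫ x : ℝ × ℝ, x.1 ^ 2 ∂P = 3 / 8 := by
  have h1 : Integrable (fun x : ℝ × ℝ => x.1) P := integrable_cont hP continuous_fst
  have h2 : Integrable (fun x : ℝ × ℝ => x.1 ^ 2) P := integrable_cont hP (by fun_prop)
  have key : ∀ c : ℝ, ∫ x : ℝ × ℝ, (x.1 / 3 + c) ^ 2 ∂P
      = (∫ x : ℝ × ℝ, x.1 ^ 2 ∂P) / 9 + 2 * c / 3 * (∫ x : ℝ × ℝ, x.1 ∂P) + c ^ 2 := by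
    intro c
    have e : (fun x : ℝ × ℝ => (x.1 / 3 + c) ^ 2)
        = fun x : ℝ × ℝ => (x.1 ^ 2 / 9 + 2 * c / 3 * x.1) + c ^ 2 := by
      funext x; ring
    have hA : Integrable (fun x : ℝ × ℝ => x.1 ^ 2 / 9 + 2 * c / 3 * x.1) P :=
      (h2.div_const 9).add (h1.const_mul _)
    have hB : Integrable (fun x : ℝ × ℝ => x.1 ^ 2 / 9) P := h2.div_const 9
    have hC : Integrable (fun x : ℝ × ℝ => 2 * c / 3 * x.1) P := h1.const_mul _
    rw [e, integral_add hA (integrable_const _), integral_add hB hC, integral_div,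
      integral_const_mul, integral_const]
    simp
  have h := unfold_integral hP h2
  simp only [S0, S1, S2, S3] at h
  rw [key 0, key (2/3), moment_fst hP] at h
  linarith

lemma moment_snd_sq (hP : SelfSimilar P) : ∫ x : ℝ × ℝ, x.2 ^ 2 ∂P = 3 / 8 := by
  have h1 : Integrable (fun x : ℝ × ℝ => x.2) P := integrable_cont hP continuous_snd
  have h2 : Integrable (fun x : ℝ × ℝ => x.2 ^ 2) P := integrable_cont hP (by fun_prop)
  have key : ∀ c : ℝ, ∫ x : ℝ × ℝ, (x.2 / 3 + c) ^ 2 ∂P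
      = (∫ x : ℝ × ℝ, x.2 ^ 2 ∂P) / 9 + 2 * c / 3 * (∫ x : ℝ × ℝ, x.2 ∂P) + c ^ 2 := by
    intro c
    have e : (fun x : ℝ × ℝ => (x.2 / 3 + c) ^ 2)
        = fun x : ℝ × ℝ => (x.2 ^ 2 / 9 + 2 * c / 3 * x.2) + c ^ 2 := by
      funext x; ring
    have hA : Integrable (fun x : ℝ × ℝ => x.2 ^ 2 / 9 + 2 * c / 3 * x.2) P :=
      (h2.div_const 9).add (h1.const_mul _)
    have hB : Integrable (fun x : ℝ × ℝ => x.2 ^ 2 / 9) P := h2.div_const 9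
    have hC : Integrable (fun x : ℝ × ℝ => 2 * c / 3 * x.2) P := h1.const_mul _
    rw [e, integral_add hA (integrable_const _), integral_add hB hC, integral_div,
      integral_const_mul, integral_const]
    simp
  have h := unfold_integral hP h2
  simp only [S0, S1, S2, S3] at h
  rw [key 0, key (2/3), moment_snd hP] at h
  linarith

lemma integral_sq (hP : SelfSimilar P) (a b : ℝ) :
    ∫ x : ℝ × ℝ, ((x.1 - a) ^ 2 + (x.2 - b) ^ 2) ∂P
      = 1 / 4 + (a - 1 / 2) ^ 2 + (b - 1 / 2) ^ 2 := by
  have h1 : Integrable (fun x : ℝ × ℝ => x.1) P := integrable_cont hP continuous_fst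
  have h2 : Integrable (fun x : ℝ × ℝ => x.1 ^ 2) P := integrable_cont hP (by fun_prop)
  have h3 : Integrable (fun x : ℝ × ℝ => x.2) P := integrable_cont hP continuous_snd
  have h4 : Integrable (fun x : ℝ × ℝ => x.2 ^ 2) P := integrable_cont hP (by fun_prop)
  have e : (fun x : ℝ × ℝ => (x.1 - a) ^ 2 + (x.2 - b) ^ 2)
      = fun x : ℝ × ℝ => (((x.1 ^ 2 - 2 * a * x.1) + (x.2 ^ 2 - 2 * b * x.2))
        + (a ^ 2 + b ^ 2)) := by
    funext x; ring
  have hA : Integrable (fun x : ℝ × ℝ => x.1 ^ 2 - 2 * a * x.1) P := h2.sub (h1.const_mul _)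
  have hB : Integrable (fun x : ℝ × ℝ => x.2 ^ 2 - 2 * b * x.2) P := h4.sub (h3.const_mul _)
  have hAB : Integrable (fun x : ℝ × ℝ => (x.1 ^ 2 - 2 * a * x.1) + (x.2 ^ 2 - 2 * b * x.2)) P :=
    hA.add hB
  rw [e, integral_add hAB (integrable_const _), integral_add hA hB,
    integral_sub h2 (h1.const_mul _), integral_sub h4 (h3.const_mul _),
    integral_const_mul, integral_const_mul, integral_const,
    moment_fst hP, moment_snd hP, moment_fst_sq hP, moment_snd_sq hP]
  simp only [measure_univ, probReal_univ, ENNReal.toReal_one, smul_eq_mul, one_mul, mul_one]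
  ring

lemma Jw_single (i : Fin 4) : Jw [i] = S i '' K := by
  simp [Jw, Sw]

lemma fin4 : ∀ i : Fin 4, i = 0 ∨ i = 1 ∨ i = 2 ∨ i = 3 := by decide

lemma image_affine (c d : ℝ) :
    (fun p : ℝ × ℝ => (p.1 / 3 + c, p.2 / 3 + d)) '' K = Icc (c, d) (1/3 + c, 1/3 + d) := by
  ext y
  constructor
  · rintro ⟨p, hp, rfl⟩
    rw [mem_K_iff] at hp
    obtain ⟨⟨h1, h2⟩, h3, h4⟩ := hp
    simp only [Set.mem_Icc, Prod.le_def]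
    refine ⟨⟨?_, ?_⟩, ?_, ?_⟩ <;> linarith
  · intro hy
    simp only [Set.mem_Icc, Prod.le_def] at hy
    obtain ⟨⟨h1, h2⟩, h3, h4⟩ := hy
    refine ⟨(3 * (y.1 - c), 3 * (y.2 - d)), ?_, ?_⟩
    · rw [mem_K_iff]
      refine ⟨⟨?_, ?_⟩, ?_, ?_⟩ <;> dsimp only <;> linarith
    · dsimp
      rw [Prod.ext_iff]
      constructor <;> dsimp <;> ring_nf

lemma Jw0 : Jw [0] = Icc ((0 : ℝ), (0 : ℝ)) (1/3, 1/3) := by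
  rw [Jw_single, show S 0 = fun p : ℝ × ℝ => (p.1 / 3 + 0, p.2 / 3 + 0) from funext S0,
    image_affine]
  norm_num

lemma Jw1 : Jw [1] = Icc ((2 : ℝ)/3, (0 : ℝ)) (1, 1/3) := by
  rw [Jw_single, show S 1 = fun p : ℝ × ℝ => (p.1 / 3 + 2/3, p.2 / 3 + 0) from funext S1,
    image_affine]
  norm_num

lemma Jw2 : Jw [2] = Icc ((0 : ℝ), (2 : ℝ)/3) (1/3, 1) := by
  rw [Jw_single, show S 2 = fun p : ℝ × ℝ => (p.1 / 3 + 0, p.2 / 3 + 2/3) from funext S2,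
    image_affine]
  norm_num

lemma Jw3 : Jw [3] = Icc ((2 : ℝ)/3, (2 : ℝ)/3) (1, 1) := by
  rw [Jw_single, show S 3 = fun p : ℝ × ℝ => (p.1 / 3 + 2/3, p.2 / 3 + 2/3) from funext S3,
    image_affine]
  norm_num

lemma Jw_measurable (i : Fin 4) : MeasurableSet (Jw [i]) := by
  rcases fin4 i with rfl | rfl | rfl | rfl
  · rw [Jw0]; exact measurableSet_Icc
  · rw [Jw1]; exact measurableSet_Icc
  · rw [Jw2]; exact measurableSet_Icc
  · rw [Jw3]; exact measurableSet_Icc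

lemma not_mem_Icc_fst_lt {y : ℝ × ℝ} {a b c d : ℝ} (h : y.1 < a) :
    y ∉ Icc ((a : ℝ), (b : ℝ)) (c, d) := by
  simp only [Set.mem_Icc, Prod.le_def]
  rintro ⟨⟨h1, -⟩, -⟩
  linarith

lemma not_mem_Icc_lt_fst {y : ℝ × ℝ} {a b c d : ℝ} (h : c < y.1) :
    y ∉ Icc ((a : ℝ), (b : ℝ)) (c, d) := by
  simp only [Set.mem_Icc, Prod.le_def]
  rintro ⟨-, h1, -⟩
  linarith

lemma not_mem_Icc_snd_lt {y : ℝ × ℝ} {a b c d : ℝ} (h : y.2 < b) :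
    y ∉ Icc ((a : ℝ), (b : ℝ)) (c, d) := by
  simp only [Set.mem_Icc, Prod.le_def]
  rintro ⟨⟨-, h1⟩, -⟩
  linarith

lemma not_mem_Icc_lt_snd {y : ℝ × ℝ} {a b c d : ℝ} (h : d < y.2) :
    y ∉ Icc ((a : ℝ), (b : ℝ)) (c, d) := by
  simp only [Set.mem_Icc, Prod.le_def]
  rintro ⟨-, -, h1⟩
  linarith

lemma S_not_mem_Jw {i j : Fin 4} (hij : j ≠ i) {x : ℝ × ℝ} (hx : x ∈ K) :
    S j x ∉ Jw [i] := by
  rw [mem_K_iff] at hx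
  obtain ⟨⟨h1, h2⟩, h3, h4⟩ := hx
  rcases fin4 i with rfl | rfl | rfl | rfl <;> rcases fin4 j with rfl | rfl | rfl | rfl <;>
    simp only [Jw0, Jw1, Jw2, Jw3, S0, S1, S2, S3] <;>
    first
      | exact absurd rfl hij
      | (apply not_mem_Icc_fst_lt; dsimp; linarith)
      | (apply not_mem_Icc_lt_fst; dsimp; linarith)
      | (apply not_mem_Icc_snd_lt; dsimp; linarith)
      | (apply not_mem_Icc_lt_snd; dsimp; linarith)

lemma setIntegral_Jw (hP : SelfSimilar P) (i : Fin 4) {g : ℝ × ℝ → ℝ} (hg : Continuous g) :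
    ∫ x in Jw [i], g x ∂P = (1/4) * ∫ x, g (S i x) ∂P := by
  have hK0 := K_compl_null hP
  have hJm := Jw_measurable i
  have hgi : Integrable g P := integrable_cont hP hg
  have hInd : Integrable ((Jw [i]).indicator g) P := hgi.indicator hJm
  rw [← integral_indicator hJm, unfold_integral hP hInd]
  have term : ∀ j : Fin 4, ∫ x, (Jw [i]).indicator g (S j x) ∂P
      = if j = i then ∫ x, g (S i x) ∂P else 0 := by
    intro j
    have hpre : MeasurableSet (S j ⁻¹' Jw [i]) := hJm.preimage (S_meas j)
    have e : (fun x => (Jw [i]).indicator g (S j x))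
        = (S j ⁻¹' Jw [i]).indicator (g ∘ S j) := by
      funext x
      exact (Set.indicator_comp_right (S j)).symm
    rw [e, integral_indicator hpre]
    by_cases hj : j = i
    · subst hj
      have : S j ⁻¹' Jw [j] = K := by
        rw [Jw_single]
        exact Set.preimage_image_eq K (S_inj j)
      rw [this, restrict_K hP]
      simp
    · have hnull : P (S j ⁻¹' Jw [i]) = 0 := by
        refine le_antisymm (le_trans (measure_mono ?_) hK0.le) zero_le
        intro x hx
        simp only [Set.mem_compl_iff]
        intro hxK
        exact S_not_mem_Jw hj hxK hx
      rw [Measure.restrict_eq_zero.2 hnull]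
      simp [hj]
  rw [term 0, term 1, term 2, term 3]
  rcases fin4 i with rfl | rfl | rfl | rfl <;>
    norm_num [show ((1:Fin 4) ≠ 0) from by decide, show ((2:Fin 4) ≠ 0) from by decide,
      show ((3:Fin 4) ≠ 0) from by decide, show ((0:Fin 4) ≠ 1) from by decide,
      show ((2:Fin 4) ≠ 1) from by decide, show ((3:Fin 4) ≠ 1) from by decide,
      show ((0:Fin 4) ≠ 2) from by decide, show ((1:Fin 4) ≠ 2) from by decide,
      show ((3:Fin 4) ≠ 2) from by decide, show ((0:Fin 4) ≠ 3) from by decide,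
      show ((1:Fin 4) ≠ 3) from by decide, show ((2:Fin 4) ≠ 3) from by decide]

end Aux

/-- The distortion error of `α₃ = {(1/6,1/6), (5/6,1/6), (1/2,5/6)}` with respect to the
Voronoi partition `J₁ ↦ (1/6,1/6)`, `J₂ ↦ (5/6,1/6)`, `J₃ ∪ J₄ ↦ (1/2,5/6)` is `1/12`. -/
theorem stmt_11 (P : Measure (ℝ × ℝ)) [IsProbabilityMeasure P] (hP : SelfSimilar P) :
    ∫ x in Jw [0], ((x.1 - 1 / 6) ^ 2 + (x.2 - 1 / 6) ^ 2) ∂P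
      + ∫ x in Jw [1], ((x.1 - 5 / 6) ^ 2 + (x.2 - 1 / 6) ^ 2) ∂P
      + ∫ x in Jw [2] ∪ Jw [3], ((x.1 - 1 / 2) ^ 2 + (x.2 - 5 / 6) ^ 2) ∂P
      = 1 / 12 := by
  have hg1 : Continuous fun x : ℝ × ℝ => (x.1 - 1/6) ^ 2 + (x.2 - 1/6) ^ 2 := by fun_prop
  have hg2 : Continuous fun x : ℝ × ℝ => (x.1 - 5/6) ^ 2 + (x.2 - 1/6) ^ 2 := by fun_prop
  have hg3 : Continuous fun x : ℝ × ℝ => (x.1 - 1/2) ^ 2 + (x.2 - 5/6) ^ 2 := by fun_prop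
  have hdisj : Disjoint (Jw [2]) (Jw [3]) := by
    rw [Set.disjoint_left]
    intro a h2 h3
    rw [Jw2, Set.mem_Icc] at h2
    rw [Jw3, Set.mem_Icc] at h3
    rw [Prod.le_def, Prod.le_def] at h2 h3
    obtain ⟨-, hb, -⟩ := h2
    obtain ⟨⟨ha, -⟩, -⟩ := h3
    dsimp at ha hb
    linarith
  have hunion : ∫ x in Jw [2] ∪ Jw [3], ((x.1 - 1/2) ^ 2 + (x.2 - 5/6) ^ 2) ∂P
      = (∫ x in Jw [2], ((x.1 - 1/2) ^ 2 + (x.2 - 5/6) ^ 2) ∂P)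
      + ∫ x in Jw [3], ((x.1 - 1/2) ^ 2 + (x.2 - 5/6) ^ 2) ∂P :=
    setIntegral_union hdisj (Jw_measurable 3)
      ((integrable_cont hP hg3).integrableOn) ((integrable_cont hP hg3).integrableOn)
  have v0 : ∫ x in Jw [0], ((x.1 - 1/6 : ℝ) ^ 2 + (x.2 - 1/6) ^ 2) ∂P = 1/144 := by
    rw [setIntegral_Jw hP 0 hg1,
      integral_congr_ae (g := fun x : ℝ × ℝ => (1/9) * ((x.1 - 1/2) ^ 2 + (x.2 - 1/2) ^ 2))
        (Filter.Eventually.of_forall fun x => by simp only [S0, S1, S2, S3]; ring),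
      integral_const_mul, integral_sq hP]
    norm_num
  have v1 : ∫ x in Jw [1], ((x.1 - 5/6 : ℝ) ^ 2 + (x.2 - 1/6) ^ 2) ∂P = 1/144 := by
    rw [setIntegral_Jw hP 1 hg2,
      integral_congr_ae (g := fun x : ℝ × ℝ => (1/9) * ((x.1 - 1/2) ^ 2 + (x.2 - 1/2) ^ 2))
        (Filter.Eventually.of_forall fun x => by simp only [S0, S1, S2, S3]; ring),
      integral_const_mul, integral_sq hP]
    norm_num
  have v2 : ∫ x in Jw [2], ((x.1 - 1/2 : ℝ) ^ 2 + (x.2 - 5/6) ^ 2) ∂P = 5/144 := by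
    rw [setIntegral_Jw hP 2 hg3,
      integral_congr_ae (g := fun x : ℝ × ℝ => (1/9) * ((x.1 - 3/2) ^ 2 + (x.2 - 1/2) ^ 2))
        (Filter.Eventually.of_forall fun x => by simp only [S0, S1, S2, S3]; ring),
      integral_const_mul, integral_sq hP]
    norm_num
  have v3 : ∫ x in Jw [3], ((x.1 - 1/2 : ℝ) ^ 2 + (x.2 - 5/6) ^ 2) ∂P = 5/144 := by
    rw [setIntegral_Jw hP 3 hg3,
      integral_congr_ae (g := fun x : ℝ × ℝ => (1/9) * ((x.1 - (-1/2)) ^ 2 + (x.2 - 1/2) ^ 2))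
        (Filter.Eventually.of_forall fun x => by simp only [S0, S1, S2, S3]; ring),
      integral_const_mul, integral_sq hP]
    norm_num
  rw [hunion, v0, v1, v2, v3]
  norm_num
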